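/- Let (b,θ,0,m) be a magnetic graph over X with potential q = 0, and let W ⊆ X be a finite nonempty set that is connected with respect to b (any two points of W are joined by a path inside W along edges with b > 0). Then ι_{1,θ}(W) = 0 if and only if there exists a nonzero function f : W → ℂ with H_{θ,W} f = 0, where H_{θ,W} f(x) = (1/m(x)) Σ_{y∈W} b(x,y)(f(x) − e^{iθ(x,y)} f(y)) for x ∈ W. -/

import Mathlib

open Complex MeasureTheory
open scoped Classical

noncomputable section

variable {X : Type*}

/-- The structural hypotheses of a magnetic graph `(b, θ, q, m)` over `X`:
`b` is nonnegative, symmetric, has zero diagonal and summable rows; the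
magnetic potential `θ` is antisymmetric modulo `2π`; the measure `m` is positive. -/
def IsMagneticGraph (b θ : X → X → ℝ) (m : X → ℝ) : Prop :=
  (∀ x y, 0 ≤ b x y) ∧ (∀ x y, b x y = b y x) ∧ (∀ x, b x x = 0) ∧
  (∀ x, Summable fun y => b x y) ∧
  (∀ x y, ∃ k : ℤ, θ x y + θ y x = 2 * Real.pi * k) ∧
  (∀ x, 0 < m x)

/-- The `p`-frustration index `ι_{p,θ}(W)` of a finite set `W`. -/
def frust (b θ : X → X → ℝ) (p : ℝ) (W : Finset X) : ℝ :=
  sInf {r : ℝ | ∃ τ : X → ℂ, (∀ x ∈ W, ‖τ x‖ = 1) ∧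
    r = (1 / 2) * ∑ x ∈ W, ∑ y ∈ W,
      b x y * ‖τ x - Complex.exp ((θ x y : ℂ) * Complex.I) * τ y‖ ^ p}

/-- The measure `b(∂W)` of the boundary `∂W = (W×(X∖W)) ∪ ((X∖W)×W)`. -/
def bBoundary (b : X → X → ℝ) (W : Finset X) : ℝ :=
  (∑ x ∈ W, ∑' y : {y : X // y ∉ W}, b x ↑y) +
  (∑ y ∈ W, ∑' x : {x : X // x ∉ W}, b ↑x y)

/-- `(a,k)_p`-magnetic-sparseness. -/
def MagSparse (b θ : X → X → ℝ) (q m : X → ℝ) (p a k : ℝ) : Prop :=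
  ∀ W : Finset X,
    (∑ x ∈ W, ∑ y ∈ W, b x y) ≤
      (1 + a) * frust b θ p W +
      a * ((1 / 2) * bBoundary b W + ∑ x ∈ W, max (q x) 0 * m x) +
      k * ∑ x ∈ W, m x

/-- The energy functional `Q_{p,θ}` on finitely supported functions. -/
def Qform (b θ : X → X → ℝ) (q m : X → ℝ) (p : ℝ) (f : X → ℂ) : ℝ :=
  (1 / 2) * ∑' x, ∑' y, b x y * ‖f x - Complex.exp ((θ x y : ℂ) * Complex.I) * f y‖ ^ p +
  ∑' x, q x * ‖f x‖ ^ p * m x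

/-- The weighted vertex degree `Deg(x) = (1/m(x)) Σ_y b(x,y) + q(x)`. -/
def Degf (b : X → X → ℝ) (q m : X → ℝ) (x : X) : ℝ :=
  (1 / m x) * ∑' y, b x y + q x

/-- The pairing `⟨Deg, |f|^p⟩ = Σ_x Deg(x) |f(x)|^p m(x)`. -/
def degPair (b : X → X → ℝ) (q m : X → ℝ) (p : ℝ) (f : X → ℂ) : ℝ :=
  ∑' x, Degf b q m x * ‖f x‖ ^ p * m x

/-- The `p`-norm to the `p`: `‖f‖_p^p = Σ_x |f(x)|^p m(x)`. -/
def pNorm (m : X → ℝ) (p : ℝ) (f : X → ℂ) : ℝ :=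
  ∑' x, ‖f x‖ ^ p * m x

/-- `q ∈ K_α^{p,θ}` with constant `C`: the negative part of `q` is form bounded. -/
def InKClass (b θ : X → X → ℝ) (q m : X → ℝ) (p α C : ℝ) : Prop :=
  ∀ f : X → ℂ, (Function.support f).Finite →
    (∑' x, max (-q x) 0 * ‖f x‖ ^ p * m x) ≤
      α * Qform b θ (fun x => max (q x) 0) m p f + C * pNorm m p f

lemma align_lemma (b θ : X → X → ℝ) (W : Finset X)
    (hb : ∀ x y, 0 ≤ b x y)
    (f : X → ℂ) (M : ℝ) (hM : 0 < M)
    (hmax : ∀ y ∈ W, ‖f y‖ ≤ M)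
    (x : X) (hfx : ‖f x‖ = M)
    (hH : ∑ y ∈ W, (b x y : ℂ) * (f x - Complex.exp ((θ x y : ℂ) * Complex.I) * f y) = 0) :
    ∀ y ∈ W, 0 < b x y → Complex.exp ((θ x y : ℂ) * Complex.I) * f y = f x := by
  classical
  set e : X → ℂ := fun y => Complex.exp ((θ x y : ℂ) * Complex.I) with he
  have hne : ∀ y, ‖e y‖ = 1 := by
    intro y
    simp only [he]
    exact Complex.norm_exp_ofReal_mul_I _
  set d : ℝ := ∑ y ∈ W, b x y with hd
  have hsum2 : ∑ y ∈ W, (b x y : ℂ) * (e y * f y) = (d : ℂ) * f x := by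
    have h1 : ∑ y ∈ W, (b x y : ℂ) * f x - ∑ y ∈ W, (b x y : ℂ) * (e y * f y) = 0 := by
      rw [← Finset.sum_sub_distrib]
      simpa [mul_sub] using hH
    have h2 : ∑ y ∈ W, (b x y : ℂ) * f x = (d : ℂ) * f x := by
      rw [← Finset.sum_mul, hd]
      push_cast
      ring
    linear_combination h2 - h1
  set g : X → ℝ := fun y => b x y * (M ^ 2 - ((starRingEnd ℂ) (f x) * (e y * f y)).re) with hg
  have hnormfx2 : Complex.normSq (f x) = M ^ 2 := by
    rw [Complex.normSq_eq_norm_sq, hfx]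
  have hre_le : ∀ y ∈ W, ((starRingEnd ℂ) (f x) * (e y * f y)).re ≤ M ^ 2 := by
    intro y hy
    calc ((starRingEnd ℂ) (f x) * (e y * f y)).re ≤ ‖(starRingEnd ℂ) (f x) * (e y * f y)‖ :=
          Complex.re_le_norm _
      _ = M * (1 * ‖f y‖) := by rw [norm_mul, norm_mul, RCLike.norm_conj, hfx, hne]
      _ ≤ M * (1 * M) := by
          have := hmax y hy
          nlinarith
      _ = M ^ 2 := by ring
  have hgnn : ∀ y ∈ W, 0 ≤ g y := by
    intro y hy
    exact mul_nonneg (hb x y) (by linarith [hre_le y hy])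
  have hgsum : ∑ y ∈ W, g y = 0 := by
    have hterm : ∀ y ∈ W, g y
        = M ^ 2 * b x y - ((starRingEnd ℂ) (f x) * ((b x y : ℂ) * (e y * f y))).re := by
      intro y hy
      rw [mul_left_comm, Complex.re_ofReal_mul]
      simp only [hg]
      ring
    calc ∑ y ∈ W, g y
        = ∑ y ∈ W, (M ^ 2 * b x y)
          - ∑ y ∈ W, ((starRingEnd ℂ) (f x) * ((b x y : ℂ) * (e y * f y))).re := by
          rw [← Finset.sum_sub_distrib]; exact Finset.sum_congr rfl hterm
      _ = M ^ 2 * d - ((starRingEnd ℂ) (f x) * ((d : ℂ) * f x)).re := by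
          rw [← Finset.mul_sum, ← hd, ← Complex.re_sum, ← Finset.mul_sum, hsum2]
      _ = 0 := by
          rw [mul_left_comm, Complex.re_ofReal_mul, ← Complex.normSq_eq_conj_mul_self,
            Complex.ofReal_re, hnormfx2]
          ring
  intro y hy hby
  have hzy : g y = 0 := (Finset.sum_eq_zero_iff_of_nonneg hgnn).mp hgsum y hy
  have hre : ((starRingEnd ℂ) (f x) * (e y * f y)).re = M ^ 2 := by
    rcases mul_eq_zero.mp hzy with h | h
    · exact absurd h (ne_of_gt hby)
    · linarith
  set w : ℂ := (starRingEnd ℂ) (f x) * (e y * f y) with hw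
  have hwle : ‖w‖ ≤ M ^ 2 := by
    rw [hw, norm_mul, norm_mul, RCLike.norm_conj, hfx, hne]
    have := hmax y hy
    nlinarith
  have hwnorm : ‖w‖ = M ^ 2 := le_antisymm hwle (hre ▸ Complex.re_le_norm w)
  have him : w.im = 0 := by
    have h1 : Complex.normSq w = w.re ^ 2 + w.im ^ 2 := by
      rw [Complex.normSq_apply]; ring
    have h2 : Complex.normSq w = (M ^ 2) ^ 2 := by
      rw [Complex.normSq_eq_norm_sq, hwnorm]
    nlinarith [sq_nonneg w.im]
  have hweq : w = ((M ^ 2 : ℝ) : ℂ) := by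
    apply Complex.ext <;> simp [← Complex.ofReal_pow, hre, him]
  have hfx0 : (starRingEnd ℂ) (f x) ≠ 0 := by
    simp only [ne_eq, map_eq_zero]
    intro h
    rw [h] at hfx
    simp at hfx
    linarith
  apply mul_left_cancel₀ hfx0
  rw [← hw, hweq, ← Complex.normSq_eq_conj_mul_self, hnormfx2]

noncomputable def sExt (W : Finset X) (σ : W → Metric.sphere (0:ℂ) 1) : X → ℂ :=
  fun x => if h : x ∈ W then (σ ⟨x, h⟩ : ℂ) else 1

lemma sExt_norm (W : Finset X) (σ : W → Metric.sphere (0:ℂ) 1) (x : X) (hx : x ∈ W) :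
    ‖sExt W σ x‖ = 1 := by
  simp only [sExt, dif_pos hx]
  have := (σ ⟨x, hx⟩).2
  rwa [mem_sphere_zero_iff_norm] at this

lemma exists_min_energy (b θ : X → X → ℝ) (W : Finset X) :
    ∃ τ : X → ℂ, (∀ x ∈ W, ‖τ x‖ = 1) ∧
      ∀ τ' : X → ℂ, (∀ x ∈ W, ‖τ' x‖ = 1) →
        (∑ x ∈ W, ∑ y ∈ W, b x y * ‖τ x - Complex.exp ((θ x y : ℂ) * Complex.I) * τ y‖)
          ≤ ∑ x ∈ W, ∑ y ∈ W, b x y * ‖τ' x - Complex.exp ((θ x y : ℂ) * Complex.I) * τ' y‖ := by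
  classical
  haveI : Nonempty (Metric.sphere (0:ℂ) 1) := ⟨⟨1, by simp⟩⟩
  have hc : ∀ x : X, Continuous fun σ : W → Metric.sphere (0:ℂ) 1 => sExt W σ x := by
    intro x
    by_cases h : x ∈ W
    · simp only [sExt, dif_pos h]
      exact continuous_subtype_val.comp (continuous_apply _)
    · simp only [sExt, dif_neg h]
      exact continuous_const
  have hg : Continuous fun σ : W → Metric.sphere (0:ℂ) 1 =>
      ∑ x ∈ W, ∑ y ∈ W, b x y * ‖sExt W σ x - Complex.exp ((θ x y : ℂ) * Complex.I) * sExt W σ y‖ := by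
    apply continuous_finset_sum
    intro x _
    apply continuous_finset_sum
    intro y _
    exact continuous_const.mul (((hc x).sub (continuous_const.mul (hc y))).norm)
  obtain ⟨σ₀, -, hmin⟩ := isCompact_univ.exists_isMinOn Set.univ_nonempty hg.continuousOn
  refine ⟨sExt W σ₀, fun x hx => sExt_norm W σ₀ x hx, ?_⟩
  intro τ' hτ'
  have h2 := hmin (Set.mem_univ (fun z : W => (⟨τ' z,
    by rw [mem_sphere_zero_iff_norm]; exact hτ' z z.2⟩ : Metric.sphere (0:ℂ) 1)))
  refine le_trans h2 (le_of_eq ?_)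
  apply Finset.sum_congr rfl
  intro x hx
  apply Finset.sum_congr rfl
  intro y hy
  simp only [sExt, dif_pos hx, dif_pos hy]

/-- for `q = 0` and a finite nonempty connected `W`, `ι_{1,θ}(W) = 0` iff the
magnetic Laplacian `H_{θ,W}` has nontrivial kernel. -/
theorem frust_one_eq_zero_iff_ker_nontrivial [Countable X]
    (b θ : X → X → ℝ) (m : X → ℝ) (hG : IsMagneticGraph b θ m)
    (W : Finset X) (hW : W.Nonempty)
    (hconn : ∀ x ∈ W, ∀ y ∈ W,
      Relation.ReflTransGen (fun u v => u ∈ W ∧ v ∈ W ∧ 0 < b u v) x y) :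
    frust b θ 1 W = 0 ↔
      ∃ f : X → ℂ, (∃ x ∈ W, f x ≠ 0) ∧
        ∀ x ∈ W, (1 / (m x : ℂ)) *
          ∑ y ∈ W, (b x y : ℂ) * (f x - Complex.exp ((θ x y : ℂ) * Complex.I) * f y) = 0 := by
  classical
  obtain ⟨hb, hsym, hdiag, hsummable, hθ, hm⟩ := hG
  set S : Set ℝ := {r : ℝ | ∃ τ : X → ℂ, (∀ x ∈ W, ‖τ x‖ = 1) ∧
    r = (1 / 2) * ∑ x ∈ W, ∑ y ∈ W,
      b x y * ‖τ x - Complex.exp ((θ x y : ℂ) * Complex.I) * τ y‖ ^ (1:ℝ)} with hS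
  have hfr : frust b θ 1 W = sInf S := rfl
  have hpow : ∀ (τ : X → ℂ),
      (∑ x ∈ W, ∑ y ∈ W, b x y * ‖τ x - Complex.exp ((θ x y : ℂ) * Complex.I) * τ y‖ ^ (1:ℝ))
        = ∑ x ∈ W, ∑ y ∈ W, b x y * ‖τ x - Complex.exp ((θ x y : ℂ) * Complex.I) * τ y‖ := by
    intro τ
    simp [Real.rpow_one]
  have hSlb : ∀ r ∈ S, (0:ℝ) ≤ r := by
    rintro r ⟨τ, hτ, rfl⟩
    apply mul_nonneg (by norm_num)
    apply Finset.sum_nonneg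
    intro x _
    apply Finset.sum_nonneg
    intro y _
    apply mul_nonneg (hb x y)
    positivity
  have hSne : S.Nonempty := ⟨_, ⟨fun _ => 1, fun x _ => by simp, rfl⟩⟩
  have hbdd : BddBelow S := ⟨0, hSlb⟩
  constructor
  · intro h0
    obtain ⟨τ₀, hτ₀, hminE⟩ := exists_min_energy b θ W
    set r₀ : ℝ := (1/2) * ∑ x ∈ W, ∑ y ∈ W,
      b x y * ‖τ₀ x - Complex.exp ((θ x y : ℂ) * Complex.I) * τ₀ y‖ with hr₀
    have hr₀mem : r₀ ∈ S := ⟨τ₀, hτ₀, by rw [hpow τ₀]⟩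
    have hr₀le : ∀ r ∈ S, r₀ ≤ r := by
      rintro r ⟨τ, hτ, rfl⟩
      rw [hpow τ]
      exact mul_le_mul_of_nonneg_left (hminE τ hτ) (by norm_num)
    have hr₀0 : r₀ = 0 := by
      refine le_antisymm ?_ (hSlb r₀ hr₀mem)
      rw [← h0, hfr]
      exact le_csInf hSne hr₀le
    have hE0 : ∑ x ∈ W, ∑ y ∈ W,
        b x y * ‖τ₀ x - Complex.exp ((θ x y : ℂ) * Complex.I) * τ₀ y‖ = 0 := by
      rw [hr₀] at hr₀0
      linarith
    have hterm : ∀ x ∈ W, ∀ y ∈ W,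
        b x y * ‖τ₀ x - Complex.exp ((θ x y : ℂ) * Complex.I) * τ₀ y‖ = 0 := by
      intro x hx
      have hx0 := (Finset.sum_eq_zero_iff_of_nonneg (fun x _ =>
        Finset.sum_nonneg (fun y _ => mul_nonneg (hb x y) (norm_nonneg _)))).mp hE0 x hx
      exact (Finset.sum_eq_zero_iff_of_nonneg
        (fun y _ => mul_nonneg (hb x y) (norm_nonneg _))).mp hx0
    obtain ⟨x₀, hx₀⟩ := hW
    refine ⟨τ₀, ⟨x₀, hx₀, ?_⟩, ?_⟩
    · intro h
      have := hτ₀ x₀ hx₀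
      rw [h] at this
      simp at this
    · intro x hx
      have hsum0 : ∑ y ∈ W, (b x y : ℂ) *
          (τ₀ x - Complex.exp ((θ x y : ℂ) * Complex.I) * τ₀ y) = 0 := by
        apply Finset.sum_eq_zero
        intro y hy
        rcases mul_eq_zero.mp (hterm x hx y hy) with h | h
        · rw [h]
          simp
        · rw [norm_eq_zero.mp h, mul_zero]
      rw [hsum0, mul_zero]
  · rintro ⟨f, ⟨x₁, hx₁, hfx₁⟩, hHf⟩
    have hsum0 : ∀ x ∈ W, ∑ y ∈ W, (b x y : ℂ) *
        (f x - Complex.exp ((θ x y : ℂ) * Complex.I) * f y) = 0 := by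
      intro x hx
      have h := hHf x hx
      have hmx : (1 / (m x : ℂ)) ≠ 0 := by
        apply one_div_ne_zero
        exact_mod_cast (hm x).ne'
      rcases mul_eq_zero.mp h with h' | h'
      · exact absurd h' hmx
      · exact h'
    obtain ⟨x₀, hx₀, hmaxall⟩ := Finset.exists_max_image W (fun y => ‖f y‖) hW
    set M : ℝ := ‖f x₀‖ with hM
    have hMpos : 0 < M := lt_of_lt_of_le (norm_pos_iff.mpr hfx₁) (hmaxall x₁ hx₁)
    have step : ∀ u v : X, (u ∈ W ∧ v ∈ W ∧ 0 < b u v) → ‖f u‖ = M → ‖f v‖ = M := by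
      rintro u v ⟨huW, hvW, hbuv⟩ hu
      have hal := align_lemma b θ W hb f M hMpos hmaxall u hu (hsum0 u huW) v hvW hbuv
      have h2 : ‖Complex.exp ((θ u v : ℂ) * Complex.I) * f v‖ = M := by rw [hal]; exact hu
      rwa [norm_mul, Complex.norm_exp_ofReal_mul_I,
        one_mul] at h2
    have hallM : ∀ y : X,
        Relation.ReflTransGen (fun u v => u ∈ W ∧ v ∈ W ∧ 0 < b u v) x₀ y → ‖f y‖ = M := by
      intro y hpath
      induction hpath with
      | refl => rfl
      | tail h hedge ih => exact step _ _ hedge ih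
    have halign : ∀ x ∈ W, ∀ y ∈ W, 0 < b x y →
        Complex.exp ((θ x y : ℂ) * Complex.I) * f y = f x := by
      intro x hx y hy hxy
      exact align_lemma b θ W hb f M hMpos hmaxall x
        (hallM x (hconn x₀ hx₀ x hx)) (hsum0 x hx) y hy hxy
    have h0mem : (0:ℝ) ∈ S := by
      refine ⟨fun y => f y / (M : ℂ), ?_, ?_⟩
      · intro x hx
        rw [norm_div, hallM x (hconn x₀ hx₀ x hx), Complex.norm_real,
          Real.norm_eq_abs, abs_of_pos hMpos, div_self hMpos.ne']
      · have hz : ∑ x ∈ W, ∑ y ∈ W, b x y *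
            ‖f x / (M : ℂ) - Complex.exp ((θ x y : ℂ) * Complex.I) * (f y / (M : ℂ))‖ ^ (1:ℝ)
            = 0 := by
          apply Finset.sum_eq_zero
          intro x hx
          apply Finset.sum_eq_zero
          intro y hy
          by_cases hxy : 0 < b x y
          · have hdiff : f x / (M : ℂ) - Complex.exp ((θ x y : ℂ) * Complex.I)
                * (f y / (M : ℂ)) = 0 := by
              rw [← mul_div_assoc, halign x hx y hy hxy, sub_self]
            rw [hdiff]
            simp
          · rw [le_antisymm (not_lt.mp hxy) (hb x y), zero_mul]
        rw [hz, mul_zero]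
    rw [hfr]
    exact le_antisymm (csInf_le hbdd h0mem) (le_csInf hSne hSlb)
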